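/- Let (r_n)_{n≥0} be a sequence of nonnegative real numbers, nonzero for all large n, such that lim_{n→∞} r_{n+1}/r_n = L ∈ (0,1). Let a > 1 be an integer with 1/a < L, and set A = ⌊a/2⌋. Then for every integer N ≥ 0, the set { ∑_{n=N}^∞ b_n r_n : b_n ∈ ℤ, |b_n| ≤ A for all n ≥ N } contains a nondegenerate closed interval containing 0 in its interior. -/

import Mathlib

open Filter

/-- Greedy digit selection step. -/
lemma greedy_step (A : ℕ) (hA : 1 ≤ A) (x ρ s : ℝ) (hρ : 0 ≤ ρ) (hs : 0 ≤ s)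
    (hx : |x| ≤ (A : ℝ) * ρ + s) (hρs : ρ ≤ 2 * s) :
    ∃ b : ℤ, |b| ≤ (A : ℤ) ∧ |x - (b : ℝ) * ρ| ≤ s := by
  have hxle := abs_le.mp hx
  rcases le_or_gt ((A : ℝ) * ρ) x with h | h
  · refine ⟨(A : ℤ), by simp, ?_⟩
    rw [abs_le]
    push_cast
    constructor <;> nlinarith
  rcases le_or_gt x (-((A : ℝ) * ρ)) with h2 | h2
  · refine ⟨-(A : ℤ), by simp, ?_⟩
    rw [abs_le]
    push_cast
    constructor <;> nlinarith
  -- now |x| ≤ A * ρ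
  rcases eq_or_lt_of_le hρ with hρ0 | hρ0
  · refine ⟨0, by simp, ?_⟩
    have : |x| ≤ 0 := by nlinarith [abs_le.mpr ⟨le_of_lt h2, le_of_lt h⟩]
    simp only [Int.cast_zero, zero_mul, sub_zero]
    linarith
  · set t : ℝ := x / ρ with ht
    have hxt : x = t * ρ := by rw [ht]; exact (div_mul_cancel₀ x hρ0.ne').symm
    have htabs : |t| ≤ (A : ℝ) := by
      rw [abs_le]
      constructor
      · rw [le_div_iff₀ hρ0]; nlinarith
      · rw [div_le_iff₀ hρ0]; nlinarith
    have hr1 : |t - (round t : ℝ)| ≤ 1 / 2 := abs_sub_round t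
    refine ⟨round t, ?_, ?_⟩
    · have : |((round t : ℤ) : ℝ)| < (A : ℝ) + 1 := by
        calc |((round t : ℤ) : ℝ)| ≤ |t| + 1/2 := by
              have := abs_sub_abs_le_abs_sub ((round t : ℤ) : ℝ) t
              have h' : |((round t : ℤ) : ℝ) - t| ≤ 1/2 := by
                rw [abs_sub_comm]; exact hr1
              linarith
          _ < (A : ℝ) + 1 := by linarith
      have : ((|round t| : ℤ) : ℝ) < ((A : ℤ) : ℝ) + 1 := by
        rw [Int.cast_abs]; exact_mod_cast this
      have := (by exact_mod_cast this : (|round t| : ℤ) < (A : ℤ) + 1)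
      omega
    · have : x - (round t : ℝ) * ρ = (t - round t) * ρ := by rw [hxt]; ring
      rw [this, abs_mul, abs_of_pos hρ0]
      nlinarith [abs_nonneg (t - (round t : ℝ))]

open Classical in
/-- Choice function for greedy digits. -/
noncomputable def gdigit (A : ℕ) (ρ s x : ℝ) : ℤ :=
  if h : ∃ b : ℤ, |b| ≤ (A : ℤ) ∧ |x - (b : ℝ) * ρ| ≤ s then h.choose else 0

lemma gdigit_spec (A : ℕ) (ρ s x : ℝ)
    (h : ∃ b : ℤ, |b| ≤ (A : ℤ) ∧ |x - (b : ℝ) * ρ| ≤ s) :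
    |gdigit A ρ s x| ≤ (A : ℤ) ∧ |x - (gdigit A ρ s x : ℝ) * ρ| ≤ s := by
  unfold gdigit
  rw [dif_pos h]
  exact h.choose_spec

set_option maxHeartbeats 1000000 in
/-- if `r_n ≥ 0`, `r_n ≠ 0` for large `n`,
`r_{n+1}/r_n → L ∈ (0,1)`, and `a > 1` is an integer with `1/a < L`, `A = ⌊a/2⌋`,
then for every `N` the set of sums `∑_{n=N}^∞ b_n r_n` with integer digits
`|b_n| ≤ A` contains a nondegenerate closed interval having `0` in its interior. -/
theorem stmt11 (r : ℕ → ℝ) (hnn : ∀ n, 0 ≤ r n)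
    (hnz : ∀ᶠ n in atTop, r n ≠ 0)
    (L : ℝ) (hL : L ∈ Set.Ioo (0 : ℝ) 1)
    (hlim : Tendsto (fun n => r (n + 1) / r n) atTop (nhds L))
    (a : ℕ) (ha : 1 < a) (haL : 1 / (a : ℝ) < L) (A : ℕ) (hA : A = a / 2) :
    ∀ N : ℕ, ∃ c e : ℝ, c < 0 ∧ 0 < e ∧
      ∀ y ∈ Set.Icc c e, ∃ b : ℕ → ℤ,
        (∀ n, |b n| ≤ (A : ℤ)) ∧ HasSum (fun n : ℕ => (b n : ℝ) * r (N + n)) y := by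
  intro N
  have hA1 : 1 ≤ A := by omega
  have hA2 : a ≤ 2 * A + 1 := by omega
  -- choose q with 1/(2A+1) < q < L
  have h2A1pos : (0 : ℝ) < 2 * (A : ℝ) + 1 := by positivity
  have hstart : 1 / (2 * (A : ℝ) + 1) < L := by
    calc 1 / (2 * (A : ℝ) + 1) ≤ 1 / (a : ℝ) := by
          apply one_div_le_one_div_of_le
          · exact_mod_cast Nat.zero_lt_of_lt ha
          · exact_mod_cast hA2
      _ < L := haL
  obtain ⟨q, hq1, hq2⟩ := exists_between hstart
  have hq0 : 0 < q := lt_trans (by positivity) hq1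
  have hq1' : q < 1 := lt_trans hq2 hL.2
  -- summability
  have hsum : Summable r := by
    apply summable_of_ratio_test_tendsto_lt_one hL.2 hnz
    simpa only [Real.norm_eq_abs, abs_of_nonneg (hnn _)] using hlim
  -- eventual ratio bound
  have hev : ∀ᶠ n in atTop, r n ≠ 0 ∧ q < r (n + 1) / r n :=
    hnz.and (hlim.eventually_const_lt hq2)
  obtain ⟨M, hM⟩ := eventually_atTop.mp hev
  have hMr : ∀ n, M ≤ n → q * r n ≤ r (n + 1) := by
    intro n hn
    have h1 := (hM n hn).1
    have h2 := (hM n hn).2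
    have hrpos : 0 < r n := lt_of_le_of_ne (hnn n) (Ne.symm h1)
    have := (lt_div_iff₀ hrpos).mp h2
    linarith
  have hMpos : ∀ n, M ≤ n → 0 < r n := fun n hn =>
    lt_of_le_of_ne (hnn n) (Ne.symm (hM n hn).1)
  set M' := max N M with hM'
  set T : ℕ → ℝ := fun m => ∑' k, r (k + m) with hT
  have hTsum : ∀ m, Summable (fun k => r (k + m)) := fun m =>
    (summable_nat_add_iff m).mpr hsum
  have hTnn : ∀ m, 0 ≤ T m := fun m => tsum_nonneg (fun k => hnn _)
  have hTrec : ∀ m, T m = r m + T (m + 1) := by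
    intro m
    have := Summable.tsum_eq_zero_add (hTsum m)
    simp only [zero_add] at this
    rw [hT]
    simp only []
    rw [this]
    congr 1
    apply tsum_congr
    intro k
    congr 1
    omega
  -- lower bound on tails
  have hTlb : ∀ m, M ≤ m → q * (1 - q)⁻¹ * r m ≤ T (m + 1) := by
    intro m hm
    have hpt : ∀ k, q ^ (k + 1) * r m ≤ r (k + (m + 1)) := by
      intro k
      induction k with
      | zero => simpa using hMr m hm
      | succ k ih =>
        have hstep : q * r (k + (m + 1)) ≤ r (k + (m + 1) + 1) := by
          apply hMr; omega
        have : q ^ (k + 1 + 1) * r m = q * (q ^ (k + 1) * r m) := by ring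
        rw [this]
        have h1 : q * (q ^ (k + 1) * r m) ≤ q * r (k + (m + 1)) := by
          apply mul_le_mul_of_nonneg_left ih (le_of_lt hq0)
        have h2 : r (k + (m + 1) + 1) = r (k + 1 + (m + 1)) := by congr 1; omega
        linarith [h2 ▸ hstep]
    have hgeos : Summable (fun k : ℕ => q ^ (k + 1) * r m) := by
      apply Summable.mul_right
      exact (summable_geometric_of_lt_one (le_of_lt hq0) hq1').comp_injective
        (add_left_injective 1)
    have hle := Summable.tsum_le_tsum hpt hgeos (hTsum (m + 1))
    have heq : ∑' k : ℕ, q ^ (k + 1) * r m = q * (1 - q)⁻¹ * r m := by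
      rw [tsum_mul_right]
      congr 1
      have : ∀ k : ℕ, q ^ (k + 1) = q * q ^ k := fun k => by ring
      rw [tsum_congr this, tsum_mul_left, tsum_geometric_of_lt_one (le_of_lt hq0) hq1']
    rw [heq] at hle
    exact hle
  -- key inequality
  have hkey : ∀ m, M ≤ m → r m ≤ 2 * (A : ℝ) * T (m + 1) := by
    intro m hm
    have h1 := hTlb m hm
    have h1q : 0 < 1 - q := by linarith
    have hq3 : 1 < (2 * (A : ℝ) + 1) * q := by
      have := (div_lt_iff₀ h2A1pos).mp hq1
      nlinarith
    have hco : 1 ≤ 2 * (A : ℝ) * (q * (1 - q)⁻¹) := by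
      rw [show 2 * (A : ℝ) * (q * (1 - q)⁻¹) = (2 * (A : ℝ) * q) / (1 - q) by field_simp,
        le_div_iff₀ h1q]
      nlinarith
    have hrm : 0 ≤ r m := hnn m
    calc r m = 1 * r m := (one_mul _).symm
      _ ≤ 2 * (A : ℝ) * (q * (1 - q)⁻¹) * r m := by
          apply mul_le_mul_of_nonneg_right hco hrm
      _ = 2 * (A : ℝ) * (q * (1 - q)⁻¹ * r m) := by ring
      _ ≤ 2 * (A : ℝ) * T (m + 1) := by
          apply mul_le_mul_of_nonneg_left h1
          positivity
  -- positivity of T M'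
  have hTM' : 0 < T M' := by
    have h0 : r (0 + M') ≤ T M' := by
      apply Summable.le_tsum (hTsum M') 0
      intro k _
      exact hnn _
    have : 0 < r (0 + M') := hMpos (0 + M') (by rw [Nat.zero_add, hM']; exact le_max_right N M)
    linarith
  have hApos : (0 : ℝ) < (A : ℝ) := by exact_mod_cast hA1
  refine ⟨-((A : ℝ) * T M'), (A : ℝ) * T M', by nlinarith, by nlinarith, ?_⟩
  intro y hy
  have hyabs : |y| ≤ (A : ℝ) * T M' := abs_le.mpr ⟨hy.1, hy.2⟩
  -- greedy recursion
  obtain ⟨g, hg0, hgs⟩ : ∃ g : ℕ → ℝ, g 0 = y ∧ ∀ k,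
      g (k + 1) = g k - (gdigit A (r (M' + k)) ((A : ℝ) * T (M' + k + 1)) (g k) : ℝ)
        * r (M' + k) :=
    ⟨fun k => Nat.rec y (fun k x =>
      x - (gdigit A (r (M' + k)) ((A : ℝ) * T (M' + k + 1)) x : ℝ) * r (M' + k)) k,
      rfl, fun k => rfl⟩
  obtain ⟨b, hbdef⟩ : ∃ b : ℕ → ℤ, ∀ k,
      b k = gdigit A (r (M' + k)) ((A : ℝ) * T (M' + k + 1)) (g k) :=
    ⟨_, fun k => rfl⟩
  have hgs' : ∀ k, g (k + 1) = g k - (b k : ℝ) * r (M' + k) := by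
    intro k; rw [hgs k, hbdef k]
  have hMM' : ∀ k, M ≤ M' + k := fun k => le_trans (le_max_right N M) (Nat.le_add_right _ _)
  have hexk : ∀ k, |g k| ≤ (A : ℝ) * T (M' + k) →
      ∃ c : ℤ, |c| ≤ (A : ℤ) ∧
        |g k - (c : ℝ) * r (M' + k)| ≤ (A : ℝ) * T (M' + k + 1) := by
    intro k hk
    apply greedy_step A hA1 _ _ _ (hnn _) (mul_nonneg (by positivity) (hTnn _))
    · have := hTrec (M' + k)
      calc |g k| ≤ (A : ℝ) * T (M' + k) := hk
        _ = (A : ℝ) * r (M' + k) + (A : ℝ) * T (M' + k + 1) := by rw [this]; ring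
    · have := hkey (M' + k) (hMM' k)
      linarith [this]
  have hinv : ∀ k, |g k| ≤ (A : ℝ) * T (M' + k) := by
    intro k
    induction k with
    | zero => rw [hg0]; simpa using hyabs
    | succ k ih =>
      have hspec := gdigit_spec A (r (M' + k)) ((A : ℝ) * T (M' + k + 1)) (g k) (hexk k ih)
      rw [← hbdef k] at hspec
      have heq : M' + (k + 1) = M' + k + 1 := by omega
      rw [hgs' k, heq]
      exact hspec.2
  have hbbd : ∀ k, |b k| ≤ (A : ℤ) := by
    intro k
    have := (gdigit_spec A (r (M' + k)) ((A : ℝ) * T (M' + k + 1)) (g k) (hexk k (hinv k))).1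
    rwa [← hbdef k] at this
  -- partial sums telescope
  have hps : ∀ K, ∑ k ∈ Finset.range K, (b k : ℝ) * r (M' + k) = y - g K := by
    intro K
    induction K with
    | zero => simp [hg0]
    | succ K ih =>
      rw [Finset.sum_range_succ, ih, hgs' K]
      ring
  -- g tends to 0
  have hT0 : Tendsto (fun K => (A : ℝ) * T (M' + K)) atTop (nhds 0) := by
    have h1 : Tendsto (fun i : ℕ => ∑' k, r (k + i)) atTop (nhds 0) := tendsto_sum_nat_add r
    have h2 : Tendsto (fun K : ℕ => M' + K) atTop atTop := tendsto_atTop_mono (fun K => Nat.le_add_left K M') tendsto_id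
    have h3 := h1.comp h2
    have := h3.const_mul (A : ℝ)
    simpa using this
  have hgto : Tendsto g atTop (nhds 0) := by
    apply squeeze_zero_norm _ hT0
    intro K
    exact hinv K
  have htend : Tendsto (fun K => ∑ k ∈ Finset.range K, (b k : ℝ) * r (M' + k)) atTop (nhds y) := by
    simp only [hps]
    have := Tendsto.sub (tendsto_const_nhds (x := y) (f := atTop (α := ℕ))) hgto
    simpa using this
  -- summability of the series
  have hsum' : Summable (fun k => (A : ℝ) * r (M' + k)) := by
    apply Summable.mul_left
    exact (hTsum M').congr (fun k => by congr 1; omega)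
  have hsb : Summable (fun k => ‖(b k : ℝ) * r (M' + k)‖) := by
    apply Summable.of_nonneg_of_le (fun k => norm_nonneg _) _ hsum'
    intro k
    rw [Real.norm_eq_abs, abs_mul, abs_of_nonneg (hnn _)]
    apply mul_le_mul_of_nonneg_right _ (hnn _)
    calc |(b k : ℝ)| = ((|b k| : ℤ) : ℝ) := by rw [Int.cast_abs]
      _ ≤ ((A : ℤ) : ℝ) := by exact_mod_cast hbbd k
      _ = (A : ℝ) := by push_cast; ring
  have hhs : HasSum (fun k => (b k : ℝ) * r (M' + k)) y := by
    rw [hasSum_iff_tendsto_nat_of_summable_norm hsb]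
    exact htend
  -- shift down to N
  set d := M' - N with hd
  have hNd : N + d = M' := by simp [hd, hM']
  set B : ℕ → ℤ := fun n => if n < d then 0 else b (n - d) with hB
  refine ⟨B, ?_, ?_⟩
  · intro n
    by_cases h : n < d
    · simp [hB, h]
    · simp [hB, h]; exact hbbd _
  · have key : (fun n => ((B (n + d) : ℤ) : ℝ) * r (N + (n + d)))
        = (fun n => (b n : ℝ) * r (M' + n)) := by
      funext n
      have h1 : ¬ (n + d < d) := by omega
      have h2 : n + d - d = n := by omega
      have h3 : N + (n + d) = M' + n := by omega
      rw [hB]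
      simp only [h1, if_false, h2, h3]
    have hfs : HasSum (fun n => ((B (n + d) : ℤ) : ℝ) * r (N + (n + d))) y := by
      rw [key]; exact hhs
    have := (hasSum_nat_add_iff (f := fun n => ((B n : ℤ) : ℝ) * r (N + n)) d).mp hfs
    have hz : ∑ i ∈ Finset.range d, ((B i : ℤ) : ℝ) * r (N + i) = 0 := by
      apply Finset.sum_eq_zero
      intro i hi
      have : i < d := Finset.mem_range.mp hi
      simp [hB, this]
    rw [hz, add_zero] at this
    exact this
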